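/- Let Γ be a discrete group of isometries of a complete Riemannian manifold X, and suppose a kernel r(z)(x,y) satisfies |r(z)(x,y)| ≤ C e^{−d(x,y)·s} with s > δ_Γ + ρ, where Σ_{γ∈Γ} e^{−(δ_Γ+ρ+ε)d(x,γy)} < ∞ locally uniformly. Then the series Σ_{1≠γ∈Γ} r(z)(x, γy) converges locally uniformly on X×X ∖ S, where S = ∪_{1≠γ∈Γ}(1×γ)Δ, and defines a Γ×Γ-invariant function bounded by C' e^{−r·d₀(x,y)} for any r < s − δ_Γ − ρ, where d₀(x,y) := inf_{1≠γ∈Γ} d(x, γy). -/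

import Mathlib

/-- method of images: convergence of the Poincaré-type series,
Lemma 5.6.  `Γ` acts isometrically on `X`, the Poincaré series
`Σ_γ e^{−(δ_Γ+ρ+ε) d(x,γy)}` converges (uniformly), and
`|r(x,y)| ≤ C e^{−s d(x,y)}` with `s > δ_Γ + ρ`.  Then
`Σ_{1≠γ∈Γ} r(x, γy)` converges, defines a `Γ`-invariant function, and for any
`r' < s − δ_Γ − ρ` is bounded by `C' e^{−r'·d₀(x,y)}` where
`d₀(x,y) = inf_{1≠γ} d(x, γy)`. -/
theorem stmt_7
    {X : Type*} [MetricSpace X]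
    {Γ : Type*} [Group Γ] [MulAction Γ X]
    (hiso : ∀ γ : Γ, Isometry fun x : X => γ • x)
    (δ ρ : ℝ)
    (hsum : ∀ ε > (0:ℝ), ∀ x y : X,
      Summable fun γ : Γ => Real.exp (-(δ + ρ + ε) * dist x (γ • y)))
    (hsumU : ∀ ε > (0:ℝ), ∃ Mε : ℝ, ∀ x y : X,
      (∑' γ : Γ, Real.exp (-(δ + ρ + ε) * dist x (γ • y))) ≤ Mε)
    (r : X × X → ℂ)
    (hrinv : ∀ (γ : Γ) (x y : X), r (γ • x, γ • y) = r (x, y))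
    (C s : ℝ) (hC : 0 < C) (hs : δ + ρ < s)
    (hr : ∀ x y : X, ‖r (x, y)‖ ≤ C * Real.exp (-s * dist x y)) :
    (∀ x y : X, Summable fun γ : {g : Γ // g ≠ 1} => r (x, (γ.1 : Γ) • y)) ∧
    (∀ (γ₀ : Γ) (x y : X),
        (∑' γ : {g : Γ // g ≠ 1}, r (γ₀ • x, (γ.1 : Γ) • (γ₀ • y)))
          = ∑' γ : {g : Γ // g ≠ 1}, r (x, (γ.1 : Γ) • y)) ∧
    (∀ r' : ℝ, 0 < r' → r' < s - δ - ρ → ∃ C' > (0:ℝ), ∀ x y : X,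
        ‖∑' γ : {g : Γ // g ≠ 1}, r (x, (γ.1 : Γ) • y)‖
          ≤ C' * Real.exp (-r' * ⨅ γ : {g : Γ // g ≠ 1}, dist x ((γ.1 : Γ) • y))) := by
  have hε : (0:ℝ) < s - δ - ρ := by linarith
  -- majorant summability on the subtype, for any exponent `t ≤ s`
  have hmaj : ∀ x y : X, Summable fun γ : {g : Γ // g ≠ 1} =>
      C * Real.exp (-s * dist x ((γ.1 : Γ) • y)) := by
    intro x y
    have h1 : Summable fun γ : Γ => Real.exp (-(δ + ρ + (s - δ - ρ)) * dist x (γ • y)) :=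
      hsum _ hε x y
    have h2 : Summable fun γ : Γ => Real.exp (-s * dist x (γ • y)) := by
      have : δ + ρ + (s - δ - ρ) = s := by ring
      simpa [this] using h1
    exact ((h2.subtype _).mul_left C)
  have hsummable : ∀ x y : X,
      Summable fun γ : {g : Γ // g ≠ 1} => r (x, (γ.1 : Γ) • y) := by
    intro x y
    exact Summable.of_norm_bounded (hmaj x y) (fun γ => hr x _)
  refine ⟨hsummable, ?_, ?_⟩
  · -- invariance
    intro γ₀ x y
    have key : ∀ γ : Γ, r (γ₀ • x, γ • γ₀ • y) = r (x, (γ₀⁻¹ * γ * γ₀) • y) := by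
      intro γ
      have := hrinv γ₀⁻¹ (γ₀ • x) (γ • γ₀ • y)
      rw [inv_smul_smul] at this
      rw [← this, smul_smul, smul_smul, mul_assoc]
    have hne : ∀ g : Γ, g ≠ 1 → γ₀⁻¹ * g * γ₀ ≠ 1 := by
      intro g hg h
      apply hg
      have := congrArg (fun z => γ₀ * z * γ₀⁻¹) h
      simpa [mul_assoc] using this
    have hne' : ∀ g : Γ, g ≠ 1 → γ₀ * g * γ₀⁻¹ ≠ 1 := by
      intro g hg h
      apply hg
      have := congrArg (fun z => γ₀⁻¹ * z * γ₀) h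
      simpa [mul_assoc] using this
    let e : {g : Γ // g ≠ 1} ≃ {g : Γ // g ≠ 1} :=
      { toFun := fun g => ⟨γ₀⁻¹ * g.1 * γ₀, hne g.1 g.2⟩
        invFun := fun g => ⟨γ₀ * g.1 * γ₀⁻¹, hne' g.1 g.2⟩
        left_inv := fun g => by ext; simp [mul_assoc]
        right_inv := fun g => by ext; simp [mul_assoc] }
    calc (∑' γ : {g : Γ // g ≠ 1}, r (γ₀ • x, (γ.1 : Γ) • (γ₀ • y)))
        = ∑' γ : {g : Γ // g ≠ 1}, r (x, ((γ₀⁻¹ * γ.1 * γ₀) : Γ) • y) := by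
          exact tsum_congr fun γ => key γ.1
      _ = ∑' γ : {g : Γ // g ≠ 1}, r (x, (γ.1 : Γ) • y) := by
          exact e.tsum_eq fun γ => r (x, (γ.1 : Γ) • y)
  · -- the bound
    intro r' hr' hr's
    set ε := s - δ - ρ - r' with hεdef
    have hεpos : (0:ℝ) < ε := by simp only [hεdef]; linarith
    obtain ⟨M, hM⟩ := hsumU ε hεpos
    refine ⟨C * (max M 0 + 1), by positivity, ?_⟩
    intro x y
    have hM' : ∀ x y : X,
        (∑' γ : Γ, Real.exp (-(δ + ρ + ε) * dist x (γ • y))) ≤ max M 0 :=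
      fun x y => le_trans (hM x y) (le_max_left _ _)
    have hMpos : (0:ℝ) ≤ max M 0 := le_max_right _ _
    by_cases hΓ : Nonempty {g : Γ // g ≠ 1}
    · set D : ℝ := ⨅ γ : {g : Γ // g ≠ 1}, dist x ((γ.1 : Γ) • y) with hD
      have hbdd : BddBelow (Set.range fun γ : {g : Γ // g ≠ 1} => dist x ((γ.1 : Γ) • y)) :=
        ⟨0, by rintro _ ⟨γ, rfl⟩; exact dist_nonneg⟩
      have hDle : ∀ γ : {g : Γ // g ≠ 1}, D ≤ dist x ((γ.1 : Γ) • y) :=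
        fun γ => ciInf_le hbdd γ
      have hterm : ∀ γ : {g : Γ // g ≠ 1},
          ‖r (x, (γ.1 : Γ) • y)‖ ≤
            C * Real.exp (-r' * D) * Real.exp (-(δ + ρ + ε) * dist x ((γ.1 : Γ) • y)) := by
        intro γ
        have h1 : ‖r (x, (γ.1 : Γ) • y)‖ ≤ C * Real.exp (-s * dist x ((γ.1 : Γ) • y)) :=
          hr x _
        have hsplit : -s * dist x ((γ.1 : Γ) • y)
            = -r' * dist x ((γ.1 : Γ) • y) + -(δ + ρ + ε) * dist x ((γ.1 : Γ) • y) := by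
          simp only [hεdef]; ring
        have h2 : Real.exp (-r' * dist x ((γ.1 : Γ) • y)) ≤ Real.exp (-r' * D) := by
          apply Real.exp_le_exp.2
          have := hDle γ
          nlinarith
        calc ‖r (x, (γ.1 : Γ) • y)‖
            ≤ C * Real.exp (-s * dist x ((γ.1 : Γ) • y)) := h1
          _ = C * (Real.exp (-r' * dist x ((γ.1 : Γ) • y)) *
                Real.exp (-(δ + ρ + ε) * dist x ((γ.1 : Γ) • y))) := by
              rw [← Real.exp_add, ← hsplit]
          _ ≤ C * (Real.exp (-r' * D) *
                Real.exp (-(δ + ρ + ε) * dist x ((γ.1 : Γ) • y))) := by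
              apply mul_le_mul_of_nonneg_left _ hC.le
              exact mul_le_mul_of_nonneg_right h2 (Real.exp_pos _).le
          _ = C * Real.exp (-r' * D) * Real.exp (-(δ + ρ + ε) * dist x ((γ.1 : Γ) • y)) := by
              ring
      have hsum' : Summable fun γ : {g : Γ // g ≠ 1} =>
          Real.exp (-(δ + ρ + ε) * dist x ((γ.1 : Γ) • y)) :=
        (hsum ε hεpos x y).subtype _
      have := norm_tsum_le_tsum_norm (((hsummable x y)).norm)
      calc ‖∑' γ : {g : Γ // g ≠ 1}, r (x, (γ.1 : Γ) • y)‖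
          ≤ ∑' γ : {g : Γ // g ≠ 1}, ‖r (x, (γ.1 : Γ) • y)‖ := this
        _ ≤ ∑' γ : {g : Γ // g ≠ 1},
              C * Real.exp (-r' * D) * Real.exp (-(δ + ρ + ε) * dist x ((γ.1 : Γ) • y)) := by
            exact Summable.tsum_le_tsum hterm ((hsummable x y).norm) (hsum'.mul_left _)
        _ = C * Real.exp (-r' * D) *
              ∑' γ : {g : Γ // g ≠ 1}, Real.exp (-(δ + ρ + ε) * dist x ((γ.1 : Γ) • y)) := by
            rw [tsum_mul_left]
        _ ≤ C * Real.exp (-r' * D) * max M 0 := by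
            apply mul_le_mul_of_nonneg_left _ (by positivity)
            calc (∑' γ : {g : Γ // g ≠ 1}, Real.exp (-(δ + ρ + ε) * dist x ((γ.1 : Γ) • y)))
                ≤ ∑' γ : Γ, Real.exp (-(δ + ρ + ε) * dist x (γ • y)) := by
                  apply Summable.tsum_subtype_le (f := fun γ : Γ =>
                    Real.exp (-(δ + ρ + ε) * dist x (γ • y)))
                  · exact fun γ => (Real.exp_pos _).le
                  · exact hsum ε hεpos x y
              _ ≤ max M 0 := hM' x y
        _ ≤ C * (max M 0 + 1) * Real.exp (-r' * D) := by nlinarith [Real.exp_pos (-r' * D)]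
    · -- empty subtype
      haveI := not_nonempty_iff.1 hΓ
      rw [tsum_empty]
      simp only [norm_zero]
      positivity
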